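/- arXiv:1305.6973 — 2 statements merged into one kernel-verified Lean document; each statement's English description precedes it below -/
import Mathlib

section
/- (Cleaning lemma for stabilizer codes.) Let S ≤ F₂^{2n} be a subspace on which the standard symplectic form vanishes identically (a stabilizer space), and set 2k = dim(S^⊥) − dim(S). For any partition of the n coordinates into sets M and M^c, define g(M) = dim((S^⊥ ∩ P_M)/(S ∩ P_M)), the number of independent logical operators supported on M. Then g(M) + g(M^c) = 2k. -/
/-- The `n`-qubit Pauli space `P = F₂ⁿ × F₂ⁿ`. -/
abbrev PauliSpace (n : ℕ) := (Fin n → ZMod 2) × (Fin n → ZMod 2)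

/-- The standard symplectic form `λ((a,b),(c,d)) = a·d + b·c` on `PauliSpace n`. -/
def sympForm {n : ℕ} (p q : PauliSpace n) : ZMod 2 :=
  dotProduct p.1 q.2 + dotProduct p.2 q.1

/-- The orthogonal complement `G^⊥ = {x : λ(x,g) = 0 for all g ∈ G}`. -/
def sympOrtho {n : ℕ} (G : Submodule (ZMod 2) (PauliSpace n)) :
    Submodule (ZMod 2) (PauliSpace n) where
  carrier := {x | ∀ g ∈ G, sympForm x g = 0}
  add_mem' := by
    intro a b ha hb g hg
    have h : sympForm (a + b) g = sympForm a g + sympForm b g := by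
      simp only [sympForm, Prod.fst_add, Prod.snd_add, add_dotProduct]
      ring
    rw [h, ha g hg, hb g hg, add_zero]
  zero_mem' := by
    intro g hg
    simp [sympForm]
  smul_mem' := by
    intro c a ha g hg
    have h : sympForm (c • a) g = c * sympForm a g := by
      simp only [sympForm, Prod.smul_fst, Prod.smul_snd, smul_dotProduct,
        smul_eq_mul]
      ring
    rw [h, ha g hg, mul_zero]

/-- `P_M`: the subspace of Pauli vectors supported on the coordinate set `M`. -/
def suppIn {n : ℕ} (M : Finset (Fin n)) : Submodule (ZMod 2) (PauliSpace n) where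
  carrier := {p | ∀ i, i ∉ M → p.1 i = 0 ∧ p.2 i = 0}
  add_mem' := by
    intro a b ha hb i hi
    obtain ⟨h1, h2⟩ := ha i hi
    obtain ⟨h3, h4⟩ := hb i hi
    constructor <;> simp [h1, h2, h3, h4]
  zero_mem' := by intro i _; simp
  smul_mem' := by
    intro c a ha i hi
    obtain ⟨h1, h2⟩ := ha i hi
    constructor <;> simp [h1, h2]

/-- `g(M) = dim ((S^⊥ ∩ P_M) / (S ∩ P_M))`, the number of independent logical operators
supported on `M`. -/
noncomputable def numLogical {n : ℕ} (S : Submodule (ZMod 2) (PauliSpace n))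
    (M : Finset (Fin n)) : ℕ :=
  Module.finrank (ZMod 2)
    ((sympOrtho S ⊓ suppIn M : Submodule (ZMod 2) (PauliSpace n)) ⧸
      Submodule.comap (sympOrtho S ⊓ suppIn M : Submodule (ZMod 2) (PauliSpace n)).subtype
        (S ⊓ suppIn M))

section Aux

open Module LinearMap Submodule

variable {n : ℕ}

/-- The symplectic form as a bilinear map. -/
noncomputable def sB (n : ℕ) : LinearMap.BilinForm (ZMod 2) (PauliSpace n) :=
  LinearMap.mk₂ (ZMod 2) sympForm
    (by intro a b c; simp only [sympForm, Prod.fst_add, Prod.snd_add,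
          add_dotProduct]; ring)
    (by intro c a b; simp only [sympForm, Prod.smul_fst, Prod.smul_snd,
          smul_dotProduct, smul_eq_mul]; ring)
    (by intro a b c; simp only [sympForm, Prod.fst_add, Prod.snd_add,
          dotProduct_add]; ring)
    (by intro c a b; simp only [sympForm, Prod.smul_fst, Prod.smul_snd,
          dotProduct_smul, smul_eq_mul]; ring)

@[simp] lemma sB_apply (p q : PauliSpace n) : sB n p q = sympForm p q := rfl

lemma sB_symm : (sB n).IsSymm := by
  constructor
  intro p q
  simp only [RingHom.id_apply, sB_apply, sympForm]
  rw [dotProduct_comm p.1 q.2, dotProduct_comm p.2 q.1]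
  ring

lemma sB_refl : (sB n).IsRefl := sB_symm.isRefl

lemma sB_nondegenerate : (sB n).Nondegenerate := by
  refine (LinearMap.IsRefl.nondegenerate_iff_separatingLeft sB_refl).2 ?_
  intro x hx
  have h1 : ∀ i, x.1 i = 0 := by
    intro i
    have := hx (0, Pi.single i 1)
    simpa [sympForm, dotProduct_single] using this
  have h2 : ∀ i, x.2 i = 0 := by
    intro i
    have := hx (Pi.single i 1, 0)
    simpa [sympForm, dotProduct_single] using this
  ext i
  · exact h1 i
  · exact h2 i

lemma sympOrtho_eq (G : Submodule (ZMod 2) (PauliSpace n)) :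
    sympOrtho G = (sB n).orthogonal G := by
  ext x
  have hs : ∀ p q : PauliSpace n, sB n p q = sB n q p := fun p q => by
    simpa using (sB_symm.eq p q)
  constructor
  · intro hx g hg
    have h0 := hx g hg
    show sB n g x = 0
    rw [hs g x]
    simpa using h0
  · intro hx g hg
    have h0 : sB n g x = 0 := hx g hg
    rw [hs g x] at h0
    simpa using h0

lemma finrank_sympOrtho (G : Submodule (ZMod 2) (PauliSpace n)) :
    Module.finrank (ZMod 2) (sympOrtho G) =
      Module.finrank (ZMod 2) (PauliSpace n) - Module.finrank (ZMod 2) G := by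
  rw [sympOrtho_eq]
  exact LinearMap.BilinForm.finrank_orthogonal sB_nondegenerate G

lemma finrank_add_finrank_sympOrtho (G : Submodule (ZMod 2) (PauliSpace n)) :
    Module.finrank (ZMod 2) G + Module.finrank (ZMod 2) (sympOrtho G) =
      Module.finrank (ZMod 2) (PauliSpace n) := by
  rw [finrank_sympOrtho]
  have := Submodule.finrank_le G
  omega

lemma sympOrtho_suppIn (M : Finset (Fin n)) :
    sympOrtho (suppIn M) = suppIn Mᶜ := by
  ext x
  constructor
  · intro hx i hi
    simp only [Finset.mem_compl, not_not] at hi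
    constructor
    · have hg : ((0 : Fin n → ZMod 2), Pi.single i (1 : ZMod 2)) ∈ suppIn M := by
        intro j hj
        refine ⟨rfl, ?_⟩
        exact Pi.single_eq_of_ne (by rintro rfl; exact hj hi) 1
      have := hx _ hg
      simpa [sympForm, dotProduct_single] using this
    · have hg : (Pi.single i (1 : ZMod 2), (0 : Fin n → ZMod 2)) ∈ suppIn M := by
        intro j hj
        refine ⟨?_, rfl⟩
        exact Pi.single_eq_of_ne (by rintro rfl; exact hj hi) 1
      have := hx _ hg
      simpa [sympForm, dotProduct_single] using this
  · intro hx g hg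
    have h1 : dotProduct x.1 g.2 = 0 := by
      apply Finset.sum_eq_zero
      intro i _
      by_cases hi : i ∈ M
      · have := hx i (by simpa using hi)
        simp [this.1]
      · have := hg i hi
        simp [this.2]
    have h2 : dotProduct x.2 g.1 = 0 := by
      apply Finset.sum_eq_zero
      intro i _
      by_cases hi : i ∈ M
      · have := hx i (by simpa using hi)
        simp [this.2]
      · have := hg i hi
        simp [this.1]
    simp [sympForm, h1, h2]

lemma sympOrtho_sup (A B : Submodule (ZMod 2) (PauliSpace n)) :
    sympOrtho (A ⊔ B) = sympOrtho A ⊓ sympOrtho B := by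
  ext x
  constructor
  · intro hx
    exact ⟨fun g hg => hx g (Submodule.mem_sup_left hg),
      fun g hg => hx g (Submodule.mem_sup_right hg)⟩
  · rintro ⟨ha, hb⟩ g hg
    obtain ⟨a, haA, b, hbB, rfl⟩ := Submodule.mem_sup.mp hg
    have hadd : sympForm x (a + b) = sympForm x a + sympForm x b := by
      simp only [sympForm, Prod.fst_add, Prod.snd_add, dotProduct_add]; ring
    rw [hadd, ha a haA, hb b hbB, add_zero]

set_option synthInstance.maxHeartbeats 1000000 in
set_option maxHeartbeats 1000000 in
lemma numLogical_eq (S : Submodule (ZMod 2) (PauliSpace n))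
    (hnull : S ≤ sympOrtho S) (M : Finset (Fin n)) :
    numLogical S M + Module.finrank (ZMod 2) (S ⊓ suppIn M : Submodule (ZMod 2) (PauliSpace n)) =
      Module.finrank (ZMod 2) (sympOrtho S ⊓ suppIn M : Submodule (ZMod 2) (PauliSpace n)) := by
  have hle : S ⊓ suppIn M ≤ sympOrtho S ⊓ suppIn M := inf_le_inf_right _ hnull
  have e := Submodule.comapSubtypeEquivOfLe hle
  have hq := Submodule.finrank_quotient_add_finrank
    (Submodule.comap (sympOrtho S ⊓ suppIn M : Submodule (ZMod 2) (PauliSpace n)).subtype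
      (S ⊓ suppIn M))
  have he : Module.finrank (ZMod 2)
      (Submodule.comap (sympOrtho S ⊓ suppIn M : Submodule (ZMod 2) (PauliSpace n)).subtype
        (S ⊓ suppIn M)) =
      Module.finrank (ZMod 2) (S ⊓ suppIn M : Submodule (ZMod 2) (PauliSpace n)) :=
    e.finrank_eq
  rw [he] at hq
  exact hq

end Aux

/-- Cleaning lemma for stabilizer codes: if `S` is a null (stabilizer) subspace of the
`n`-qubit Pauli space and `2k = dim S^⊥ − dim S`, then for any set `M` of coordinates,
`g(M) + g(Mᶜ) = 2k`. -/
theorem statement_2 {n : ℕ} (S : Submodule (ZMod 2) (PauliSpace n))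
    (hnull : S ≤ sympOrtho S) (k : ℕ)
    (hk : Module.finrank (ZMod 2) (sympOrtho S) = 2 * k + Module.finrank (ZMod 2) S)
    (M : Finset (Fin n)) :
    numLogical S M + numLogical S Mᶜ = 2 * k := by
  classical
  set d := Module.finrank (ZMod 2) (PauliSpace n) with hd
  -- key: for any N, finrank (S⊥ ⊓ P_N) + finrank (S ⊔ P_{Nᶜ}) = d
  have key : ∀ N : Finset (Fin n),
      Module.finrank (ZMod 2)
          (sympOrtho S ⊓ suppIn N : Submodule (ZMod 2) (PauliSpace n)) +
        Module.finrank (ZMod 2)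
          (S ⊔ suppIn Nᶜ : Submodule (ZMod 2) (PauliSpace n)) = d := by
    intro N
    have h1 : sympOrtho (S ⊔ suppIn Nᶜ) = sympOrtho S ⊓ suppIn N := by
      rw [sympOrtho_sup, sympOrtho_suppIn, compl_compl]
    have h2 := finrank_add_finrank_sympOrtho (S ⊔ suppIn Nᶜ)
    rw [h1] at h2
    omega
  have hsup : ∀ N : Finset (Fin n),
      Module.finrank (ZMod 2) (S ⊔ suppIn N : Submodule (ZMod 2) (PauliSpace n)) +
        Module.finrank (ZMod 2) (S ⊓ suppIn N : Submodule (ZMod 2) (PauliSpace n)) =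
      Module.finrank (ZMod 2) S + Module.finrank (ZMod 2) (suppIn N) :=
    fun N => Submodule.finrank_sup_add_finrank_inf_eq S (suppIn N)
  have hP : Module.finrank (ZMod 2) (suppIn M) +
      Module.finrank (ZMod 2) (suppIn Mᶜ) = d := by
    have h1 := finrank_add_finrank_sympOrtho (suppIn M)
    rw [sympOrtho_suppIn] at h1
    omega
  have hS := finrank_add_finrank_sympOrtho S
  have e1 := numLogical_eq S hnull M
  have e2 := numLogical_eq S hnull Mᶜ
  have k1 := key M
  have k2 := key Mᶜ
  rw [compl_compl] at k2
  have s1 := hsup M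
  have s2 := hsup Mᶜ
  omega
end

section
/- Let R = F₂[x^{±1}, y^{±1}] be the Laurent polynomial ring in two variables and let σ : R² → R⁴ be given by the matrix with columns (1+x̄, 1+ȳ, 0, 0)ᵀ and (0, 0, 1+y, 1+x)ᵀ, where x̄ = x^{−1}, ȳ = y^{−1} (the 2D toric code generating map). Let ε : R⁴ → R² be the matrix with rows (0, 0, 1+x, 1+y) and (1+ȳ, 1+x̄, 0, 0). Then ε ∘ σ = 0 and ker ε = im σ, i.e. the sequence R² → R⁴ → R² is exact at R⁴. -/
open AddMonoidAlgebra

/-- Laurent polynomial ring `F₂[x^{±1}, y^{±1}]` realized as the group algebra of `ℤ²`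
over `F₂`. -/
abbrev LaurentF2 := AddMonoidAlgebra (ZMod 2) (ℤ × ℤ)

/-- The Laurent monomial `x^i y^j`. -/
noncomputable def lmon (i j : ℤ) : LaurentF2 := AddMonoidAlgebra.single (i, j) 1

/-- The 2D toric code generating map `σ : R² → R⁴`, as a `4×2` matrix with columns
`(1+x⁻¹, 1+y⁻¹, 0, 0)ᵀ` and `(0, 0, 1+y, 1+x)ᵀ`. -/
noncomputable def toricSigma : Matrix (Fin 4) (Fin 2) LaurentF2 :=
  !![1 + lmon (-1) 0, 0;
     1 + lmon 0 (-1), 0;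
     0, 1 + lmon 0 1;
     0, 1 + lmon 1 0]

/-- The 2D toric code excitation map `ε : R⁴ → R²`, as a `2×4` matrix with rows
`(0, 0, 1+x, 1+y)` and `(1+y⁻¹, 1+x⁻¹, 0, 0)`. -/
noncomputable def toricEpsilon : Matrix (Fin 2) (Fin 4) LaurentF2 :=
  !![0, 0, 1 + lmon 1 0, 1 + lmon 0 1;
     1 + lmon 0 (-1), 1 + lmon (-1) 0, 0, 0]

/-! ### Auxiliary lemmas -/

lemma two_eq_zero : (2 : LaurentF2) = 0 := by
  rw [show (2:LaurentF2) = 1+1 from (one_add_one_eq_two).symm, AddMonoidAlgebra.one_def,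
    ← AddMonoidAlgebra.single_add]
  rw [show (1+1 : ZMod 2) = 0 by decide, AddMonoidAlgebra.single_zero]

lemma add_self (z : LaurentF2) : z + z = 0 := by linear_combination two_eq_zero * z

lemma one_add_lmon_ne (i j : ℤ) (hg : ((i:ℤ),(j:ℤ)) ≠ (0,0)) : (1 + lmon i j) ≠ 0 := by
  intro h
  have this : (1 + lmon i j : LaurentF2).coeff (i,j) = (0 : LaurentF2).coeff (i,j) := by rw [h]
  rw [lmon, AddMonoidAlgebra.one_def] at this
  classical
  rw [show ((AddMonoidAlgebra.single (0:ℤ×ℤ) (1:ZMod 2) + AddMonoidAlgebra.single (i,j) (1:ZMod 2)).coeff (i,j))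
      = (AddMonoidAlgebra.single (0:ℤ×ℤ) (1:ZMod 2)).coeff (i,j) + (AddMonoidAlgebra.single ((i:ℤ),(j:ℤ)) (1:ZMod 2)).coeff (i,j) from rfl,
    AddMonoidAlgebra.coeff_single_apply, AddMonoidAlgebra.coeff_single_apply,
    if_neg (show ¬((0:ℤ×ℤ) = (i,j)) from fun he => hg he.symm), if_pos rfl] at this
  have h2 : (0 + 1 : ZMod 2) = 0 := this
  exact absurd h2 (by decide)

lemma one_add_singleZ_ne (i : ℤ) (hg : i ≠ 0) :
    (1 + AddMonoidAlgebra.single i 1 : AddMonoidAlgebra (ZMod 2) ℤ) ≠ 0 := by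
  intro h
  have this : (1 + AddMonoidAlgebra.single i 1 : AddMonoidAlgebra (ZMod 2) ℤ).coeff i
      = (0 : AddMonoidAlgebra (ZMod 2) ℤ).coeff i := by rw [h]
  rw [AddMonoidAlgebra.one_def] at this
  classical
  rw [show ((AddMonoidAlgebra.single (0:ℤ) (1:ZMod 2) + AddMonoidAlgebra.single i (1:ZMod 2)).coeff i)
      = (AddMonoidAlgebra.single (0:ℤ) (1:ZMod 2)).coeff i + (AddMonoidAlgebra.single (i:ℤ) (1:ZMod 2)).coeff i from rfl,
    AddMonoidAlgebra.coeff_single_apply, AddMonoidAlgebra.coeff_single_apply,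
    if_neg (show ¬((0:ℤ) = i) from fun he => hg he.symm), if_pos rfl] at this
  have h2 : (0 + 1 : ZMod 2) = 0 := this
  exact absurd h2 (by decide)

lemma singleZ_add_self (g : ℤ) :
    (AddMonoidAlgebra.single g 1 + AddMonoidAlgebra.single g 1
      : AddMonoidAlgebra (ZMod 2) ℤ) = 0 := by
  rw [← AddMonoidAlgebra.single_add, show (1+1 : ZMod 2) = 0 by decide, AddMonoidAlgebra.single_zero]

lemma slice_sum (a : LaurentF2)
    (h : AddMonoidAlgebra.mapDomain Prod.fst a = (0 : AddMonoidAlgebra (ZMod 2) ℤ)) (i : ℤ) :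
    ∑ q ∈ a.coeff.support.filter (fun q => q.1 = i), a.coeff q = 0 := by
  classical
  have := congrArg (fun x => AddMonoidAlgebra.coeff x i) h
  simp only [AddMonoidAlgebra.mapDomain, AddMonoidAlgebra.coeff_ofCoeff, AddMonoidAlgebra.coeff_zero] at this
  rw [Finsupp.mapDomain, Finsupp.sum_apply, Finsupp.sum] at this
  simp only [Finsupp.single_apply, Finsupp.coe_zero, Pi.zero_apply] at this
  rw [Finset.sum_filter]
  exact this

/-- If all `x`-slice coefficient sums of `a` vanish then `1 + y` divides `a`. -/
lemma divide_y (a : LaurentF2)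
    (h : AddMonoidAlgebra.mapDomain Prod.fst a = (0 : AddMonoidAlgebra (ZMod 2) ℤ)) :
    ∃ c : LaurentF2, a = (1 + lmon 0 1) * c := by
  classical
  set cfun : ℤ × ℤ → ZMod 2 :=
    fun p => ∑ q ∈ a.coeff.support.filter (fun q => q.1 = p.1 ∧ p.2 < q.2), a.coeff q with hcfun
  set S : Finset (ℤ × ℤ) :=
    a.coeff.support.biUnion (fun p => a.coeff.support.biUnion
      (fun q => {p.1} ×ˢ Finset.Icc q.2 (p.2 - 1))) with hS
  have hsupp : ∀ p : ℤ × ℤ, cfun p ≠ 0 → p ∈ S := by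
    intro p hp
    obtain ⟨q, hq, hq0⟩ := Finset.exists_ne_zero_of_sum_ne_zero hp
    rw [Finset.mem_filter] at hq
    obtain ⟨hqs, hq1, hq2⟩ := hq
    have hex : ∃ q' ∈ a.coeff.support, q'.1 = p.1 ∧ q'.2 ≤ p.2 := by
      by_contra hcon
      push_neg at hcon
      apply hp
      have this : a.coeff.support.filter (fun q => q.1 = p.1 ∧ p.2 < q.2)
          = a.coeff.support.filter (fun q => q.1 = p.1) := by
        apply Finset.filter_congr
        intro x hx
        simp only [eq_iff_iff, and_iff_left_iff_imp]
        intro hx1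
        exact hcon x hx hx1
      show (∑ q ∈ a.coeff.support.filter (fun q => q.1 = p.1 ∧ p.2 < q.2), a.coeff q) = 0
      rw [this]
      exact slice_sum a h p.1
    obtain ⟨q', hq's, hq'1, hq'2⟩ := hex
    rw [hS]
    refine Finset.mem_biUnion.2 ⟨q, hqs, Finset.mem_biUnion.2 ⟨q', hq's, ?_⟩⟩
    simp only [Finset.mem_product, Finset.mem_singleton, Finset.mem_Icc]
    exact ⟨hq1.symm, hq'2, by omega⟩
  set c : LaurentF2 := AddMonoidAlgebra.ofCoeff (Finsupp.onFinset S cfun hsupp) with hc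
  refine ⟨c, ?_⟩
  ext p
  have hmul : ((1 + lmon 0 1) * c).coeff p = c.coeff p + c.coeff (p.1, p.2 - 1) := by
    rw [add_mul, one_mul, AddMonoidAlgebra.coeff_add, Finsupp.add_apply, lmon, AddMonoidAlgebra.coeff_single_mul_apply, one_mul]
    congr 1
    · show c.coeff (-(0,1) + p) = c.coeff (p.1, p.2 - 1)
      congr 1
      simp [Prod.ext_iff]
      omega
  rw [hmul]
  have h1 : c.coeff p = cfun p := rfl
  have h2 : c.coeff (p.1, p.2 - 1) = cfun (p.1, p.2 - 1) := rfl
  rw [h1, h2, hcfun]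
  have key : (∑ q ∈ a.coeff.support.filter (fun q => q.1 = p.1 ∧ p.2 - 1 < q.2), a.coeff q)
      = (∑ q ∈ a.coeff.support.filter (fun q => q.1 = p.1 ∧ p.2 < q.2), a.coeff q) + a.coeff p := by
    have hset : a.coeff.support.filter (fun q => q.1 = p.1 ∧ p.2 - 1 < q.2)
        = a.coeff.support.filter (fun q => (q.1 = p.1 ∧ p.2 < q.2) ∨ q = p) := by
      apply Finset.filter_congr
      intro x hx
      constructor
      · rintro ⟨h1', h2'⟩
        rcases lt_or_eq_of_le (by omega : p.2 ≤ x.2) with hlt | heq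
        · exact Or.inl ⟨h1', hlt⟩
        · exact Or.inr (Prod.ext h1' heq.symm)
      · rintro (⟨h1', h2'⟩ | rfl)
        · exact ⟨h1', by omega⟩
        · exact ⟨rfl, by omega⟩
    rw [hset, Finset.filter_or, Finset.sum_union, Finset.filter_eq']
    · congr 1
      split
      · exact Finset.sum_singleton a.coeff p
      · simp
        next hnp => exact (Finsupp.notMem_support_iff.1 hnp).symm
    · rw [Finset.disjoint_left]
      rintro x hx1 hx2
      rw [Finset.mem_filter] at hx1 hx2
      rcases hx1.2 with ⟨_, hlt⟩
      rcases hx2.2 with rfl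
      omega
  show a.coeff p = (∑ q ∈ a.coeff.support.filter (fun q => q.1 = p.1 ∧ p.2 < q.2), a.coeff q)
      + (∑ q ∈ a.coeff.support.filter (fun q => q.1 = p.1 ∧ p.2 - 1 < q.2), a.coeff q)
  rw [key]
  generalize a.coeff p = ap
  generalize (∑ q ∈ a.coeff.support.filter (fun q => q.1 = p.1 ∧ p.2 < q.2), a.coeff q) = s
  have h2s : s + s = 0 := by
    have : (2 : ZMod 2) = 0 := by decide
    linear_combination this * s
  rw [← add_assoc, h2s, zero_add]

/-- If all `y`-slice coefficient sums of `a` vanish then `1 + x` divides `a`. -/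
lemma divide_x (a : LaurentF2)
    (h : AddMonoidAlgebra.mapDomain Prod.snd a = (0 : AddMonoidAlgebra (ZMod 2) ℤ)) :
    ∃ c : LaurentF2, a = (1 + lmon 1 0) * c := by
  classical
  set e := AddMonoidAlgebra.domCongr (ZMod 2) (ZMod 2) (AddEquiv.prodComm (M := ℤ) (N := ℤ))
  have he : ∀ b : LaurentF2, (e b : LaurentF2) = AddMonoidAlgebra.mapDomain (Prod.swap) b := by
    intro b
    ext p
    rw [AddMonoidAlgebra.coeff_domCongr]
    show _ = Finsupp.mapDomain Prod.swap b.coeff p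
    have : p = Prod.swap (Prod.swap p) := rfl
    rw [this, Finsupp.mapDomain_apply Prod.swap_injective]
    rfl
  have h' : AddMonoidAlgebra.mapDomain Prod.fst (e a : LaurentF2) = 0 := by
    rw [he]
    apply AddMonoidAlgebra.coeff_injective
    show Finsupp.mapDomain Prod.fst (Finsupp.mapDomain Prod.swap a.coeff) = (0 : ℤ →₀ ZMod 2)
    rw [← Finsupp.mapDomain_comp]
    have : (Prod.fst ∘ Prod.swap : ℤ × ℤ → ℤ) = Prod.snd := rfl
    rw [this]
    exact congrArg AddMonoidAlgebra.coeff h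
  obtain ⟨c, hc⟩ := divide_y (e a) h'
  refine ⟨e.symm c, ?_⟩
  have := congrArg e.symm hc
  rw [AlgEquiv.symm_apply_apply, map_mul, map_add, map_one] at this
  rw [this]
  congr 2
  rw [lmon, lmon, show ((0:ℤ),(1:ℤ)) = (AddEquiv.prodComm (M := ℤ) (N := ℤ)) (1,0) from rfl,
    ← AddMonoidAlgebra.domCongr_single (R := ZMod 2) (A := ZMod 2)]
  exact e.symm_apply_apply _

lemma epsSigma : toricEpsilon * toricSigma = 0 := by
  rw [← Matrix.ext_iff]
  intro i j
  fin_cases i <;> fin_cases j <;>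
    simp [toricEpsilon, toricSigma, Matrix.mul_apply, Fin.sum_univ_four,
      Matrix.vecHead, Matrix.vecTail] <;>
    first
      | (rw [mul_comm (1 + lmon 1 0) (1 + lmon 0 1)]; exact add_self _)
      | (rw [mul_comm (1 + lmon 0 (-1)) (1 + lmon (-1) 0)]; exact add_self _)

/-- Exactness of the 2D toric code: `ε ∘ σ = 0` and `ker ε = im σ`, i.e. the sequence
`R² →σ R⁴ →ε R²` is exact at `R⁴`. -/
theorem statement_19 :
    toricEpsilon * toricSigma = 0 ∧
    LinearMap.ker toricEpsilon.mulVecLin = LinearMap.range toricSigma.mulVecLin := by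
  refine ⟨epsSigma, ?_⟩
  apply le_antisymm
  · -- ker ⊆ range
    intro v hv
    rw [LinearMap.mem_ker, Matrix.mulVecLin_apply] at hv
    have eq0 : (1 + lmon 1 0) * v 2 + (1 + lmon 0 1) * v 3 = 0 := by
      have := congrFun hv 0
      simpa [toricEpsilon, Matrix.mulVec, dotProduct, Fin.sum_univ_four] using this
    have eq1 : (1 + lmon 0 (-1)) * v 0 + (1 + lmon (-1) 0) * v 1 = 0 := by
      have := congrFun hv 1
      simpa [toricEpsilon, Matrix.mulVec, dotProduct, Fin.sum_univ_four] using this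
    -- the y-divisibility of v 2
    set φy := AddMonoidAlgebra.mapDomainRingHom (ZMod 2) (AddMonoidHom.fst ℤ ℤ) with hφy
    have hy0 : φy (1 + lmon 0 1) = 0 := by
      rw [map_add, map_one]
      have : φy (lmon 0 1) = AddMonoidAlgebra.single (0:ℤ) 1 := by
        show AddMonoidAlgebra.mapDomain _ (AddMonoidAlgebra.single ((0:ℤ),(1:ℤ)) (1:ZMod 2)) = _
        rw [AddMonoidAlgebra.mapDomain_single]
        rfl
      rw [this, AddMonoidAlgebra.one_def, singleZ_add_self]
    have hy1 : φy (1 + lmon 1 0) = 1 + AddMonoidAlgebra.single (1:ℤ) 1 := by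
      rw [map_add, map_one]
      congr 1
      show AddMonoidAlgebra.mapDomain _ (AddMonoidAlgebra.single ((1:ℤ),(0:ℤ)) (1:ZMod 2)) = _
      rw [AddMonoidAlgebra.mapDomain_single]
      rfl
    have hv2 : AddMonoidAlgebra.mapDomain Prod.fst (v 2) = (0 : AddMonoidAlgebra (ZMod 2) ℤ) := by
      have h0 := congrArg φy eq0
      rw [map_add, map_mul, map_mul, hy0, hy1, zero_mul, add_zero, map_zero] at h0
      rcases mul_eq_zero.1 h0 with h | h
      · exact absurd h (one_add_singleZ_ne 1 (by decide))
      · exact h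
    obtain ⟨c, hc⟩ := divide_y (v 2) hv2
    have hv3 : v 3 = (1 + lmon 1 0) * c := by
      have hz : (1 + lmon 0 1) * ((1 + lmon 1 0) * c + v 3) = 0 := by
        linear_combination eq0 - (1 + lmon 1 0) * hc
      rcases mul_eq_zero.1 hz with h | h
      · exact absurd h (one_add_lmon_ne 0 1 (by simp))
      · linear_combination h - two_eq_zero * ((1 + lmon 1 0) * c)
    -- the x-divisibility of v 0
    set φx := AddMonoidAlgebra.mapDomainRingHom (ZMod 2) (AddMonoidHom.snd ℤ ℤ) with hφx
    have hx0 : φx (1 + lmon (-1) 0) = 0 := by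
      rw [map_add, map_one]
      have : φx (lmon (-1) 0) = AddMonoidAlgebra.single (0:ℤ) 1 := by
        show AddMonoidAlgebra.mapDomain _ (AddMonoidAlgebra.single ((-1:ℤ),(0:ℤ)) (1:ZMod 2)) = _
        rw [AddMonoidAlgebra.mapDomain_single]
        rfl
      rw [this, AddMonoidAlgebra.one_def, singleZ_add_self]
    have hx1 : φx (1 + lmon 0 (-1)) = 1 + AddMonoidAlgebra.single (-1:ℤ) 1 := by
      rw [map_add, map_one]
      congr 1
      show AddMonoidAlgebra.mapDomain _ (AddMonoidAlgebra.single ((0:ℤ),(-1:ℤ)) (1:ZMod 2)) = _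
      rw [AddMonoidAlgebra.mapDomain_single]
      rfl
    have hv0 : AddMonoidAlgebra.mapDomain Prod.snd (v 0) = (0 : AddMonoidAlgebra (ZMod 2) ℤ) := by
      have h0 := congrArg φx eq1
      rw [map_add, map_mul, map_mul, hx0, hx1, zero_mul, add_zero, map_zero] at h0
      rcases mul_eq_zero.1 h0 with h | h
      · exact absurd h (one_add_singleZ_ne (-1) (by decide))
      · exact h
    obtain ⟨c', hc'⟩ := divide_x (v 0) hv0
    have hxx : lmon (-1) 0 * lmon 1 0 = 1 := by
      rw [lmon, lmon, AddMonoidAlgebra.single_mul_single]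
      norm_num
      rfl
    set d := lmon 1 0 * c' with hdd
    have hd : v 0 = (1 + lmon (-1) 0) * d := by
      rw [hdd]
      linear_combination hc' - c' * hxx
    have hv1 : v 1 = (1 + lmon 0 (-1)) * d := by
      have hz : (1 + lmon (-1) 0) * ((1 + lmon 0 (-1)) * d + v 1) = 0 := by
        linear_combination eq1 - (1 + lmon 0 (-1)) * hd
      rcases mul_eq_zero.1 hz with h | h
      · exact absurd h (one_add_lmon_ne (-1) 0 (by simp))
      · linear_combination h - two_eq_zero * ((1 + lmon 0 (-1)) * d)
    refine ⟨![d, c], ?_⟩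
    rw [Matrix.mulVecLin_apply]
    funext i
    fin_cases i <;>
      simp [toricSigma, Matrix.mulVec, dotProduct, Fin.sum_univ_two,
        Matrix.vecHead, Matrix.vecTail]
    · exact hd.symm
    · exact hv1.symm
    · exact hc.symm
    · exact hv3.symm
  · -- range ⊆ ker
    rintro v ⟨u, rfl⟩
    rw [LinearMap.mem_ker, Matrix.mulVecLin_apply, Matrix.mulVecLin_apply,
      Matrix.mulVec_mulVec, epsSigma, Matrix.zero_mulVec]
end
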